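/- Let G = G_{3,n} = S_3 □ P_n with n even. Then rn(G) ≤ (3n²)/2 + n. -/

import Mathlib

/-- The star graph on `m` vertices with center `0`. -/
def starGraph (m : ℕ) : SimpleGraph (Fin m) :=
  SimpleGraph.fromRel (fun a _ => (a : ℕ) = 0)

/-- The path graph on `n` vertices `0, 1, …, n-1`. -/
def pathGraph' (n : ℕ) : SimpleGraph (Fin n) :=
  SimpleGraph.fromRel (fun a b => (a : ℕ) + 1 = b)

/-- The stacked-book graph `G_{m,n} = S_m □ P_n`. -/
def bookGraph (m n : ℕ) : SimpleGraph (Fin m × Fin n) :=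
  (starGraph m).boxProd (pathGraph' n)

/-- `f` is a radio labeling of `G` for diameter `D`:
`|f u - f v| ≥ D + 1 - d(u,v)` for all distinct `u, v`. -/
def IsRadioLabeling {V : Type*} (G : SimpleGraph V) (D : ℕ) (f : V → ℕ) : Prop :=
  ∀ u v : V, u ≠ v → (D : ℤ) + 1 - G.dist u v ≤ |(f u : ℤ) - (f v : ℤ)|

/-- The span of a labeling: maximum label minus minimum label. -/
noncomputable def span {V : Type*} (f : V → ℕ) : ℕ :=
  sSup (Set.range f) - sInf (Set.range f)

/-- The radio number of the stacked-book graph `G_{m,n}` (whose diameter is `n+1`). -/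
noncomputable def rnBook (m n : ℕ) : ℕ :=
  sInf {s | ∃ f : Fin m × Fin n → ℕ, IsRadioLabeling (bookGraph m n) (n + 1) f ∧ span f = s}

/-! ### Auxiliary machinery -/

/-- Distance in the 3-star between page indices. -/
def dsN (a b : ℕ) : ℕ := if a = b then 0 else if a = 0 ∨ b = 0 then 1 else 2

/-- A lower bound for the graph distance in the book graph. -/
def DlowF {n : ℕ} (u v : Fin 3 × Fin n) : ℕ :=
  (((u.2 : ℕ) - (v.2 : ℕ)) + ((v.2 : ℕ) - (u.2 : ℕ))) + dsN (u.1 : ℕ) (v.1 : ℕ)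

lemma dsN_step : ∀ a b c : Fin 3, ((a : ℕ) = 0 ∨ (b : ℕ) = 0) →
    dsN (a : ℕ) (c : ℕ) ≤ dsN (b : ℕ) (c : ℕ) + 1 := by decide

lemma DlowF_le_length {n : ℕ} {u v : Fin 3 × Fin n} (p : (bookGraph 3 n).Walk u v) :
    DlowF u v ≤ p.length := by
  induction p with
  | nil => simp [DlowF, dsN]
  | @cons u w v h p ih =>
    have step : DlowF u v ≤ DlowF w v + 1 := by
      rw [bookGraph] at h
      rcases SimpleGraph.boxProd_adj.mp h with ⟨ha, hi⟩ | ⟨hi, ha⟩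
      · rw [starGraph, SimpleGraph.fromRel_adj] at ha
        have hstep := dsN_step u.1 w.1 v.1
          (by rcases ha.2 with h'|h' <;> [exact Or.inl h'; exact Or.inr h'])
        simp only [DlowF, hi]
        omega
      · rw [pathGraph', SimpleGraph.fromRel_adj] at hi
        have hv : (u.2:ℕ) + 1 = (w.2:ℕ) ∨ (w.2:ℕ) + 1 = (u.2:ℕ) := hi.2
        simp only [DlowF, ha]
        omega
    have := SimpleGraph.Walk.length_cons h p
    omega

lemma starGraph_connected : (starGraph 3).Connected := by
  constructor
  · have h0 : ∀ a : Fin 3, (starGraph 3).Reachable a 0 := by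
      intro a
      by_cases h : a = 0
      · rw [h]
      · exact SimpleGraph.Adj.reachable
          ((SimpleGraph.fromRel_adj _ _ _).mpr ⟨h, Or.inr rfl⟩)
    intro a b
    exact (h0 a).trans (h0 b).symm

lemma pathGraph'_connected (n : ℕ) (hn : 0 < n) : (pathGraph' n).Connected := by
  have key : ∀ k (hk : k < n), (pathGraph' n).Reachable ⟨0, hn⟩ ⟨k, hk⟩ := by
    intro k
    induction k with
    | zero => intro hk; rfl
    | succ k ih =>
      intro hk
      have hk' : k < n := by omega
      refine (ih hk').trans (SimpleGraph.Adj.reachable ?_)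
      exact (SimpleGraph.fromRel_adj _ _ _).mpr
        ⟨by simp [Fin.ext_iff], Or.inl rfl⟩
  have : Nonempty (Fin n) := ⟨⟨0, hn⟩⟩
  constructor
  intro a b
  have ha := key a.val a.isLt
  have hb := key b.val b.isLt
  simp only [Fin.eta] at ha hb
  exact ha.symm.trans hb

lemma bookGraph_connected (n : ℕ) (hn : 0 < n) : (bookGraph 3 n).Connected := by
  rw [bookGraph]
  exact SimpleGraph.connected_boxProd.mpr ⟨starGraph_connected, pathGraph'_connected n hn⟩

lemma DlowF_le_dist {n : ℕ} (hn : 0 < n) (u v : Fin 3 × Fin n) :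
    DlowF u v ≤ (bookGraph 3 n).dist u v := by
  obtain ⟨p, hp⟩ :=
    ((bookGraph_connected n hn).preconnected u v).exists_walk_length_eq_dist
  rw [← hp]
  exact DlowF_le_length p

/-- The explicit radio labeling of `G_{3,2m}`. -/
def labN (m a i : ℕ) : ℕ :=
  if a = 1 then (if i < m then 6*(i*m)+3*i+3*m+2 else 6*((i-m)*m)+3*(i-m))
  else if a = 2 then (if i < m then 6*(i*m)+3*i+m else 6*((i-m)*m)+3*(i-m)+4*m+2)
  else (if i < m then 6*(i*m)+3*i+5*m+3 else 6*((i-m)*m)+3*(i-m)+2*m+1)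

lemma prodTri (u v m : ℕ) :
    (u*m = v*m ∧ u = v) ∨ (u*m + m ≤ v*m ∧ u + 1 ≤ v) ∨ (v*m + m ≤ u*m ∧ v + 1 ≤ u) := by
  rcases Nat.lt_trichotomy u v with h|h|h
  · refine Or.inr (Or.inl ⟨?_, h⟩)
    have h3 := mul_le_mul_left (Nat.succ_le_of_lt h) m
    rwa [Nat.succ_mul] at h3
  · exact Or.inl ⟨by rw [h], h⟩
  · refine Or.inr (Or.inr ⟨?_, h⟩)
    have h3 := mul_le_mul_left (Nat.succ_le_of_lt h) m
    rwa [Nat.succ_mul] at h3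

set_option maxHeartbeats 1000000 in
lemma coreL (m : ℕ) (hm : 1 ≤ m) (a b i j : ℕ) (ha : a < 3) (hb : b < 3)
    (hi : i < 2*m) (hj : j < 2*m) (hne : ¬(a = b ∧ i = j)) :
    2*m+2 ≤ ((labN m a i - labN m b j) + (labN m b j - labN m a i)) + ((i-j)+(j-i))
      + dsN a b := by
  rcases Nat.lt_or_ge i m with hi1|hi1 <;> rcases Nat.lt_or_ge j m with hj1|hj1
  · have hc := prodTri i j m
    interval_cases a <;> interval_cases b <;> simp only [labN, dsN] <;>
      norm_num <;> split_ifs <;> omega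
  · have hc := prodTri i (j-m) m
    interval_cases a <;> interval_cases b <;> simp only [labN, dsN] <;>
      norm_num <;> split_ifs <;> omega
  · have hc := prodTri (i-m) j m
    interval_cases a <;> interval_cases b <;> simp only [labN, dsN] <;>
      norm_num <;> split_ifs <;> omega
  · have hc := prodTri (i-m) (j-m) m
    interval_cases a <;> interval_cases b <;> simp only [labN, dsN] <;>
      norm_num <;> split_ifs <;> omega

lemma labN_le (m a i : ℕ) (hi : i < 2*m) : labN m a i ≤ 6*(m*m)+2*m := by
  have hc1 := prodTri i m m
  have hc2 := prodTri (i-m) m m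
  unfold labN
  split_ifs <;> omega

lemma natAbsCast (x y : ℕ) : (((x - y) + (y - x) : ℕ) : ℤ) = |(x : ℤ) - y| := by
  rcases le_total x y with h | h
  · rw [Nat.sub_eq_zero_of_le h, zero_add, Nat.cast_sub h, abs_sub_comm,
      abs_of_nonneg (sub_nonneg.mpr (by exact_mod_cast h))]
  · rw [Nat.sub_eq_zero_of_le h, add_zero, Nat.cast_sub h,
      abs_of_nonneg (sub_nonneg.mpr (by exact_mod_cast h))]

lemma radioLab (n m : ℕ) (hm : 1 ≤ m) (hnm : n = 2*m) :
    IsRadioLabeling (bookGraph 3 n) (n+1)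
      (fun x => labN m (x.1 : ℕ) (x.2 : ℕ)) := by
  intro u v huv
  dsimp only
  have hd : DlowF u v ≤ (bookGraph 3 n).dist u v := DlowF_le_dist (by omega) u v
  have hne : ¬((u.1 : ℕ) = (v.1 : ℕ) ∧ (u.2 : ℕ) = (v.2 : ℕ)) := by
    rintro ⟨h1, h2⟩
    exact huv (Prod.ext (Fin.ext h1) (Fin.ext h2))
  have hcore := coreL m hm (u.1 : ℕ) (v.1 : ℕ) (u.2 : ℕ) (v.2 : ℕ)
    u.1.isLt v.1.isLt (by omega) (by omega) hne
  rw [← natAbsCast]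
  have hD : DlowF u v =
      (((u.2 : ℕ) - (v.2 : ℕ)) + ((v.2 : ℕ) - (u.2 : ℕ))) + dsN (u.1 : ℕ) (v.1 : ℕ) := rfl
  omega

theorem rnBook_three_upper (n : ℕ) (hn : Even n) (hn2 : 2 ≤ n) :
    rnBook 3 n ≤ 3 * n ^ 2 / 2 + n := by
  obtain ⟨m, hnm⟩ := hn
  have hm : 1 ≤ m := by omega
  have hnm' : n = 2*m := by omega
  set f : Fin 3 × Fin n → ℕ := fun x => labN m (x.1 : ℕ) (x.2 : ℕ) with hf
  have hr : IsRadioLabeling (bookGraph 3 n) (n+1) f := radioLab n m hm hnm'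
  have hmem : rnBook 3 n ≤ span f := Nat.sInf_le ⟨f, hr, rfl⟩
  have hsup : sSup (Set.range f) ≤ 6*(m*m)+2*m := by
    have hne : (Set.range f).Nonempty := ⟨f (0, ⟨0, by omega⟩), ⟨(0, ⟨0, by omega⟩), rfl⟩⟩
    refine csSup_le hne ?_
    rintro y ⟨x, rfl⟩
    exact labN_le m (x.1 : ℕ) (x.2 : ℕ) (by have := x.2.isLt; omega)
  have hspan : span f ≤ 6*(m*m)+2*m := le_trans (Nat.sub_le _ _) hsup
  have hsq : n^2 = 4*(m*m) := by subst hnm'; ring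
  omega
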